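/- Let G be a graph containing six distinct vertices x_0, x_1, y_0, y_1, z, z' such that z is a common neighbor of x_0 and x_1 with z ∉ N(y_0) ∪ N(y_1), and z' is a common neighbor of y_0 and y_1 with z' ∉ N(x_0) ∪ N(x_1). Then every unweighted leaf root of G contains the quartet x_0 x_1 | y_0 y_1. -/

import Mathlib

open SimpleGraph

namespace LeafPaper

/-- A leaf of a graph: a vertex with exactly one neighbor. -/
def IsLeaf {W : Type} (T : SimpleGraph W) (w : W) : Prop := ∃! u, T.Adj w u

/-- The edge list of the (unique, if `T` is a tree) path between `x` and `y`. -/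
noncomputable def treePathEdges {W : Type} (T : SimpleGraph W) (x y : W) :
    List (Sym2 W) := by
  classical
  exact if h : T.Reachable x y then (Classical.choice h).bypass.edges else []

/-- The weighted distance between `x` and `y` in a tree `T` with edge weighting `f`:
the sum of the weights of the edges on the (unique) path between `x` and `y`. -/
noncomputable def wdist {W : Type} (T : SimpleGraph W) (f : Sym2 W → ℕ) (x y : W) : ℕ :=
  ((treePathEdges T x y).map f).sum

/-- `(T, f)` is a leaf root of `G` with threshold `k`, where `ι` identifies the
vertices of `G` with the leaves of `T`. -/
def IsLeafRoot {V W : Type} (G : SimpleGraph V) (T : SimpleGraph W) (ι : V → W)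
    (f : Sym2 W → ℕ) (k : ℕ) : Prop :=
  T.IsTree ∧ Function.Injective ι ∧ (∀ w : W, IsLeaf T w ↔ w ∈ Set.range ι) ∧
    (∀ e ∈ T.edgeSet, 0 < f e) ∧
    ∀ u v : V, u ≠ v → (G.Adj u v ↔ wdist T f (ι u) (ι v) ≤ k)

/-- An unweighted tree `T` is an unweighted leaf root of `G` if some positive
integer weighting of its edges makes it a leaf root of `G`. -/
def IsUnweightedLeafRoot {V W : Type} (G : SimpleGraph V) (T : SimpleGraph W)
    (ι : V → W) : Prop :=
  ∃ (f : Sym2 W → ℕ) (k : ℕ), IsLeafRoot G T ι f k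

/-- `G` is a leaf power: there are a finite tree `T` whose leaf set is exactly `V(G)`
and a positive threshold `k` such that distinct vertices are adjacent in `G` iff their
tree distance is at most `k`. -/
def IsLeafPower {V : Type} (G : SimpleGraph V) : Prop :=
  ∃ (W : Type) (T : SimpleGraph W) (ι : V → W) (k : ℕ),
    Finite W ∧ T.IsTree ∧ Function.Injective ι ∧
      (∀ w : W, IsLeaf T w ↔ w ∈ Set.range ι) ∧ 0 < k ∧
      ∀ u v : V, u ≠ v → (G.Adj u v ↔ T.dist (ι u) (ι v) ≤ k)

/-- An alternating cycle `(x 0, y 0, x 1, y 1, …)` of `G`: `2c` distinct vertices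
such that `x i y i` is an edge and `y i x (i+1)` is a non-edge (indices mod `c`). -/
def IsAltCycle {V : Type} (G : SimpleGraph V) (c : ℕ) (x y : ZMod c → V) : Prop :=
  2 ≤ c ∧ Function.Injective (Sum.elim x y) ∧
    ∀ i : ZMod c, G.Adj (x i) (y i) ∧ ¬ G.Adj (y i) (x (i + 1))

/-- The weighted tree `(T, f)` satisfies the alternating cycle given by `x, y`
with threshold `k`. -/
def Satisfies {V W : Type} (T : SimpleGraph W) (f : Sym2 W → ℕ) (ι : V → W)
    (c : ℕ) (x y : ZMod c → V) (k : ℕ) : Prop :=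
  ∀ i : ZMod c, wdist T f (ι (x i)) (ι (y i)) ≤ k ∧
    k < wdist T f (ι (y i)) (ι (x (i + 1)))

/-- The unweighted tree `T` can satisfy the alternating cycle given by `x, y`. -/
def CanSatisfy {V W : Type} (T : SimpleGraph W) (ι : V → W) (c : ℕ)
    (x y : ZMod c → V) : Prop :=
  ∃ (f : Sym2 W → ℕ) (k : ℕ), (∀ e ∈ T.edgeSet, 0 < f e) ∧ Satisfies T f ι c x y k

/-- `T` contains the quartet `ab|cd`: the four vertices are distinct leaves of `T` and
the path between `a` and `b` is vertex-disjoint from the path between `c` and `d`. -/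
def ContainsQuartet {W : Type} (T : SimpleGraph W) (a b c d : W) : Prop :=
  IsLeaf T a ∧ IsLeaf T b ∧ IsLeaf T c ∧ IsLeaf T d ∧ a ≠ b ∧ c ≠ d ∧
    ∀ (p : T.Walk a b) (p' : T.Walk c d), p.IsPath → p'.IsPath →
      ∀ w : W, w ∈ p.support → w ∉ p'.support


section Aux

variable {W : Type} {T : SimpleGraph W} {f : Sym2 W → ℕ}

lemma wdist_eq_sum (hT : T.IsTree) {x y : W} (p : T.Walk x y) (hp : p.IsPath) :
    wdist T f x y = (p.edges.map f).sum := by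
  classical
  have h : T.Reachable x y := ⟨p⟩
  unfold wdist treePathEdges
  rw [dif_pos h]
  have key : ∀ (r : T.Walk x y), r.IsPath → (List.map f r.edges).sum = (List.map f p.edges).sum := by
    intro r hr
    rw [(hT.existsUnique_path x y).unique hr hp]
  exact key _ (SimpleGraph.Walk.bypass_isPath _)

lemma wdist_self (hT : T.IsTree) (x : W) : wdist T f x x = 0 := by
  classical
  rw [wdist_eq_sum hT (SimpleGraph.Walk.nil) SimpleGraph.Walk.IsPath.nil]
  simp

lemma wdist_symm (hT : T.IsTree) (x y : W) : wdist T f x y = wdist T f y x := by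
  classical
  by_cases h : T.Reachable x y
  · obtain ⟨q⟩ := h
    rw [wdist_eq_sum hT q.bypass q.bypass_isPath,
        wdist_eq_sum hT q.bypass.reverse q.bypass_isPath.reverse,
        SimpleGraph.Walk.edges_reverse, List.map_reverse, List.sum_reverse]
  · have h' : ¬ T.Reachable y x := fun hr => h hr.symm
    unfold wdist treePathEdges
    rw [dif_neg h, dif_neg h']

lemma wdist_add (hT : T.IsTree) {x y w : W} (p : T.Walk x y) (hp : p.IsPath)
    (hw : w ∈ p.support) :
    wdist T f x y = wdist T f x w + wdist T f w y := by
  classical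
  have hp' : ((p.takeUntil w hw).append (p.dropUntil w hw)).IsPath := by
    rw [SimpleGraph.Walk.take_spec p hw]; exact hp
  rw [wdist_eq_sum hT _ hp', wdist_eq_sum hT _ (hp.takeUntil hw),
      wdist_eq_sum hT _ (hp.dropUntil hw), SimpleGraph.Walk.edges_append,
      List.map_append, List.sum_append]

lemma exists_first (S : Set W) {z w : W} (q : T.Walk z w) (hw : w ∈ S) :
    ∃ m, m ∈ S ∧ ∃ q1 : T.Walk z m, ∃ q2 : T.Walk m w,
      q = q1.append q2 ∧ ∀ v ∈ q1.support, v ∈ S → v = m := by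
  classical
  induction q with
  | nil =>
    refine ⟨_, hw, SimpleGraph.Walk.nil, SimpleGraph.Walk.nil, rfl, ?_⟩
    intro v hv _
    simpa using hv
  | @cons a b c h q ih =>
    by_cases ha : a ∈ S
    · refine ⟨a, ha, SimpleGraph.Walk.nil, SimpleGraph.Walk.cons h q, ?_, ?_⟩
      · rw [SimpleGraph.Walk.nil_append]
      · intro v hv _
        simpa using hv
    · obtain ⟨m, hm, q1, q2, heq, hprop⟩ := ih hw
      refine ⟨m, hm, SimpleGraph.Walk.cons h q1, q2, ?_, ?_⟩
      · rw [SimpleGraph.Walk.cons_append, ← heq]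
      · intro v hv hvS
        rw [SimpleGraph.Walk.support_cons] at hv
        rcases List.mem_cons.mp hv with hv1 | hv1
        · exact absurd (hv1 ▸ hvS) ha
        · exact hprop v hv1 hvS

lemma sub_path {x y m u : W} {p : T.Walk x y} (hp : p.IsPath) (hm : m ∈ p.support)
    (hu : u ∈ p.support) :
    ∃ s : T.Walk m u, s.IsPath ∧ ∀ v ∈ s.support, v ∈ p.support := by
  classical
  by_cases h : u ∈ (p.dropUntil m hm).support
  · exact ⟨(p.dropUntil m hm).takeUntil u h, (hp.dropUntil hm).takeUntil h,
      fun v hv => SimpleGraph.Walk.support_dropUntil_subset p hm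
        ((SimpleGraph.Walk.support_takeUntil_subset _ h) hv)⟩
  · have hu' : u ∈ (p.takeUntil m hm).support := by
      have hts := SimpleGraph.Walk.take_spec p hm
      rw [← hts, SimpleGraph.Walk.mem_support_append_iff] at hu
      tauto
    exact ⟨((p.takeUntil m hm).dropUntil u hu').reverse,
      ((hp.takeUntil hm).dropUntil hu').reverse,
      fun v hv => by
        rw [SimpleGraph.Walk.support_reverse, List.mem_reverse] at hv
        exact SimpleGraph.Walk.support_takeUntil_subset p hm
          (SimpleGraph.Walk.support_dropUntil_subset _ hu' hv)⟩

lemma append_isPath {a b c : W} {p : T.Walk a b} {q : T.Walk b c} (hp : p.IsPath)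
    (hq : q.IsPath) (h : ∀ v ∈ p.support, v ∈ q.support → v = b) :
    (p.append q).IsPath := by
  rw [SimpleGraph.Walk.isPath_def, SimpleGraph.Walk.support_append, List.nodup_append]
  refine ⟨hp.support_nodup, hq.support_nodup.tail, ?_⟩
  rintro v hv1 _ hv2 rfl
  have hv2' : v ∈ q.support := List.mem_of_mem_tail hv2
  have hvb : v = b := h v hv1 hv2'
  have hnd := hq.support_nodup
  rw [q.support_eq_cons, List.nodup_cons] at hnd
  exact hnd.1 (hvb ▸ hv2)

lemma proj (hT : T.IsTree) {x y : W} (p : T.Walk x y) (hp : p.IsPath) (z : W) :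
    ∃ m, m ∈ p.support ∧
      ∀ u ∈ p.support, wdist T f z u = wdist T f z m + wdist T f m u := by
  classical
  obtain ⟨q0⟩ := hT.isConnected.preconnected z x
  obtain ⟨m, hm, q1, q2, heq, hprop⟩ :=
    exists_first {v | v ∈ p.support} q0.bypass p.start_mem_support
  have hq1 : q1.IsPath := by
    have := q0.bypass_isPath
    rw [heq] at this
    exact this.of_append_left
  refine ⟨m, hm, ?_⟩
  intro u hu
  obtain ⟨s, hs, hsub⟩ := sub_path hp hm hu
  have happ : (q1.append s).IsPath :=
    append_isPath hq1 hs (fun v hv1 hv2 => hprop v hv1 (hsub v hv2))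
  rw [wdist_eq_sum hT _ happ, SimpleGraph.Walk.edges_append, List.map_append,
      List.sum_append, ← wdist_eq_sum hT q1 hq1, ← wdist_eq_sum hT s hs]

lemma key (hT : T.IsTree) {x0 x1 w : W} (p : T.Walk x0 x1) (hp : p.IsPath)
    (hw : w ∈ p.support) (z : W) :
    wdist T f z x0 = wdist T f z w + wdist T f w x0 ∨
    wdist T f z x1 = wdist T f z w + wdist T f w x1 := by
  classical
  obtain ⟨m, hm, hproj⟩ := proj (f := f) hT p hp z
  have hzw : wdist T f z w = wdist T f z m + wdist T f m w := hproj w hw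
  by_cases h : w ∈ (p.dropUntil m hm).support
  · right
    have h1 : wdist T f m x1 = wdist T f m w + wdist T f w x1 :=
      wdist_add hT _ (hp.dropUntil hm) h
    have h2 : wdist T f z x1 = wdist T f z m + wdist T f m x1 :=
      hproj x1 p.end_mem_support
    omega
  · left
    have hw' : w ∈ (p.takeUntil m hm).support := by
      have hts := SimpleGraph.Walk.take_spec p hm
      rw [← hts, SimpleGraph.Walk.mem_support_append_iff] at hw
      tauto
    have h1 : wdist T f x0 m = wdist T f x0 w + wdist T f w m :=
      wdist_add hT _ (hp.takeUntil hm) hw'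
    have h2 : wdist T f z x0 = wdist T f z m + wdist T f m x0 :=
      hproj x0 p.start_mem_support
    have s1 : wdist T f m x0 = wdist T f x0 m := wdist_symm hT m x0
    have s2 : wdist T f x0 w = wdist T f w x0 := wdist_symm hT x0 w
    have s3 : wdist T f w m = wdist T f m w := wdist_symm hT w m
    omega

lemma wdist_triangle (hT : T.IsTree) (a b c : W) :
    wdist T f a c ≤ wdist T f a b + wdist T f b c := by
  classical
  obtain ⟨q0⟩ := hT.isConnected.preconnected b c
  obtain ⟨m, hm, hproj⟩ := proj (f := f) hT q0.bypass q0.bypass_isPath a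
  have h1 := hproj c q0.bypass.end_mem_support
  have h2 := hproj b q0.bypass.start_mem_support
  have h3 : wdist T f b c = wdist T f b m + wdist T f m c :=
    wdist_add (f := f) hT q0.bypass q0.bypass_isPath hm
  have h4 : wdist T f b m = wdist T f m b := wdist_symm hT b m
  omega

lemma side (hT : T.IsTree) {a b w : W} (p : T.Walk a b) (hp : p.IsPath)
    (hw : w ∈ p.support) (z c0 c1 : W) (k : ℕ)
    (ha : wdist T f z a ≤ k) (hb : wdist T f z b ≤ k)
    (hc0 : k < wdist T f z c0) (hc1 : k < wdist T f z c1) :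
    (wdist T f w a < wdist T f w c0 ∧ wdist T f w a < wdist T f w c1) ∨
    (wdist T f w b < wdist T f w c0 ∧ wdist T f w b < wdist T f w c1) := by
  have t0 := wdist_triangle (f := f) hT z w c0
  have t1 := wdist_triangle (f := f) hT z w c1
  rcases key (f := f) hT p hp hw z with h | h
  · left; constructor <;> omega
  · right; constructor <;> omega

end Aux

/-- if `G` has six distinct vertices `x₀, x₁, y₀, y₁, z, z'` where `z`
is a common neighbor of `x₀, x₁` not adjacent to `y₀` nor `y₁`, and `z'` is a common
neighbor of `y₀, y₁` not adjacent to `x₀` nor `x₁`, then every unweighted leaf root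
of `G` contains the quartet `x₀ x₁ | y₀ y₁`. -/
theorem stmt_19 {V : Type} [Fintype V] (G : SimpleGraph V)
    (x0 x1 y0 y1 z z' : V)
    (hdistinct : List.Pairwise (· ≠ ·) [x0, x1, y0, y1, z, z'])
    (hzx0 : G.Adj z x0) (hzx1 : G.Adj z x1)
    (hzy0 : ¬ G.Adj z y0) (hzy1 : ¬ G.Adj z y1)
    (hz'y0 : G.Adj z' y0) (hz'y1 : G.Adj z' y1)
    (hz'x0 : ¬ G.Adj z' x0) (hz'x1 : ¬ G.Adj z' x1) :
    ∀ {W : Type} (T : SimpleGraph W) (ι : V → W), IsUnweightedLeafRoot G T ι →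
      ContainsQuartet T (ι x0) (ι x1) (ι y0) (ι y1) := by
  intro W T ι hroot
  obtain ⟨f, k, hT, hinj, hleaf, hpos, hadj⟩ := hroot
  simp only [List.pairwise_cons, List.mem_cons, List.not_mem_nil, List.mem_singleton,
    forall_eq_or_imp, forall_eq, or_false] at hdistinct
  obtain ⟨⟨h01, h0y0, h0y1, h0z, h0z'⟩, ⟨h1y0, h1y1, h1z, h1z'⟩,
    ⟨hy01, hy0z, hy0z'⟩, ⟨hy1z, hy1z'⟩, hzz', -, -⟩ := hdistinct
  have hd1 : wdist T f (ι z) (ι x0) ≤ k := (hadj z x0 (Ne.symm h0z)).1 hzx0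
  have hd2 : wdist T f (ι z) (ι x1) ≤ k := (hadj z x1 (Ne.symm h1z)).1 hzx1
  have hd3 : k < wdist T f (ι z) (ι y0) :=
    not_le.mp (fun h => hzy0 ((hadj z y0 (Ne.symm hy0z)).2 h))
  have hd4 : k < wdist T f (ι z) (ι y1) :=
    not_le.mp (fun h => hzy1 ((hadj z y1 (Ne.symm hy1z)).2 h))
  have he1 : wdist T f (ι z') (ι y0) ≤ k := (hadj z' y0 (Ne.symm hy0z')).1 hz'y0
  have he2 : wdist T f (ι z') (ι y1) ≤ k := (hadj z' y1 (Ne.symm hy1z')).1 hz'y1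
  have he3 : k < wdist T f (ι z') (ι x0) :=
    not_le.mp (fun h => hz'x0 ((hadj z' x0 (Ne.symm h0z')).2 h))
  have he4 : k < wdist T f (ι z') (ι x1) :=
    not_le.mp (fun h => hz'x1 ((hadj z' x1 (Ne.symm h1z')).2 h))
  refine ⟨(hleaf _).2 ⟨x0, rfl⟩, (hleaf _).2 ⟨x1, rfl⟩, (hleaf _).2 ⟨y0, rfl⟩,
    (hleaf _).2 ⟨y1, rfl⟩, fun h => h01 (hinj h), fun h => hy01 (hinj h), ?_⟩
  intro p p' hp hp' w hwp hwp'
  have P := side (f := f) hT p hp hwp (ι z) (ι y0) (ι y1) k hd1 hd2 hd3 hd4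
  have Q := side (f := f) hT p' hp' hwp' (ι z') (ι x0) (ι x1) k he1 he2 he3 he4
  rcases P with ⟨p1, p2⟩ | ⟨p1, p2⟩ <;> rcases Q with ⟨q1, q2⟩ <;> omega

end LeafPaper
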